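/- Let ρ be a homomorphism from a group G to the group of orientation-preserving homeomorphisms of ℝ. Let g₁, g₂ ∈ G, let g₃ be a product of elements from {g₁, g₂} containing at least one factor g₁, and let g₄ be a product of elements from {g₁⁻¹, g₂} containing at least one factor g₁⁻¹. If s ∈ ℝ is a common fixed point of ρ(g₃) and ρ(g₄), then s is a fixed point of ρ(g₁). -/

import Mathlib

private lemma list_ge {G : Type*} [Group G] (ρ : G →* (ℝ ≃o ℝ)) (s : ℝ) :
    ∀ w : List G, (∀ u ∈ w, s ≤ ρ u s) → s ≤ ρ w.prod s := by
  intro w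
  induction w with
  | nil => intro _; simp
  | cons u w ih =>
    intro h
    have h1 : s ≤ ρ w.prod s := ih fun v hv => h v (List.mem_cons_of_mem _ hv)
    have h2 : s ≤ ρ u s := h u (List.mem_cons_self)
    calc s ≤ ρ u s := h2
    _ ≤ ρ u (ρ w.prod s) := (ρ u).monotone h1
    _ = ρ (u * w.prod) s := by rw [map_mul]; rfl
    _ = ρ (u :: w).prod s := by rw [List.prod_cons]

private lemma list_gt {G : Type*} [Group G] (ρ : G →* (ℝ ≃o ℝ)) (s : ℝ) (v : G) :
    ∀ w : List G, (∀ u ∈ w, s ≤ ρ u s) → v ∈ w → s < ρ v s → s < ρ w.prod s := by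
  intro w
  induction w with
  | nil => intro _ hv; exact absurd hv (List.not_mem_nil)
  | cons u w ih =>
    intro h hv hsv
    have heq : ρ (u :: w).prod s = ρ u (ρ w.prod s) := by
      rw [List.prod_cons, map_mul]; rfl
    rw [heq]
    have hw : ∀ x ∈ w, s ≤ ρ x s := fun x hx => h x (List.mem_cons_of_mem _ hx)
    rcases List.mem_cons.mp hv with rfl | hv
    · calc s < ρ v s := hsv
      _ ≤ ρ v (ρ w.prod s) := (ρ v).monotone (list_ge ρ s w hw)
    · calc s ≤ ρ u s := h u (List.mem_cons_self)
      _ < ρ u (ρ w.prod s) := (ρ u).strictMono (ih hw hv hsv)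

private lemma list_le {G : Type*} [Group G] (ρ : G →* (ℝ ≃o ℝ)) (s : ℝ) :
    ∀ w : List G, (∀ u ∈ w, ρ u s ≤ s) → ρ w.prod s ≤ s := by
  intro w
  induction w with
  | nil => intro _; simp
  | cons u w ih =>
    intro h
    have h1 : ρ w.prod s ≤ s := ih fun v hv => h v (List.mem_cons_of_mem _ hv)
    have heq : ρ (u :: w).prod s = ρ u (ρ w.prod s) := by
      rw [List.prod_cons, map_mul]; rfl
    rw [heq]
    calc ρ u (ρ w.prod s) ≤ ρ u s := (ρ u).monotone h1
    _ ≤ s := h u (List.mem_cons_self)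

private lemma list_lt {G : Type*} [Group G] (ρ : G →* (ℝ ≃o ℝ)) (s : ℝ) (v : G) :
    ∀ w : List G, (∀ u ∈ w, ρ u s ≤ s) → v ∈ w → ρ v s < s → ρ w.prod s < s := by
  intro w
  induction w with
  | nil => intro _ hv; exact absurd hv (List.not_mem_nil)
  | cons u w ih =>
    intro h hv hsv
    have heq : ρ (u :: w).prod s = ρ u (ρ w.prod s) := by
      rw [List.prod_cons, map_mul]; rfl
    rw [heq]
    have hw : ∀ x ∈ w, ρ x s ≤ s := fun x hx => h x (List.mem_cons_of_mem _ hx)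
    rcases List.mem_cons.mp hv with rfl | hv
    · calc ρ v (ρ w.prod s) ≤ ρ v s := (ρ v).monotone (list_le ρ s w hw)
      _ < s := hsv
    · calc ρ u (ρ w.prod s) < ρ u s := (ρ u).strictMono (ih hw hv hsv)
      _ ≤ s := h u (List.mem_cons_self)

/-- if `g₃` is a product of factors from `{g₁, g₂}` with at least one factor `g₁`,
and `g₄` is a product of factors from `{g₁⁻¹, g₂}` with at least one factor `g₁⁻¹`, then a
common fixed point of `ρ g₃` and `ρ g₄` is a fixed point of `ρ g₁`. -/
theorem fixed_point_general_rule
    (G : Type*) [Group G] (ρ : G →* (ℝ ≃o ℝ))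
    (g₁ g₂ g₃ g₄ : G)
    (h₃ : ∃ w : List G, (∀ u ∈ w, u = g₁ ∨ u = g₂) ∧ g₁ ∈ w ∧ g₃ = w.prod)
    (h₄ : ∃ w : List G, (∀ u ∈ w, u = g₁⁻¹ ∨ u = g₂) ∧ g₁⁻¹ ∈ w ∧ g₄ = w.prod)
    (s : ℝ) (hs₃ : ρ g₃ s = s) (hs₄ : ρ g₄ s = s) :
    ρ g₁ s = s := by
  obtain ⟨w₃, hw₃, hm₃, rfl⟩ := h₃
  obtain ⟨w₄, hw₄, hm₄, rfl⟩ := h₄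
  by_contra hne
  -- inverse relation
  have hinv : ∀ t : ℝ, s < ρ g₁ s → ρ g₁⁻¹ s < s := by
    intro _ h
    have := (ρ g₁⁻¹).strictMono h
    rwa [show (ρ g₁⁻¹) ((ρ g₁) s) = s by
      rw [show (ρ g₁⁻¹) ((ρ g₁) s) = ρ (g₁⁻¹ * g₁) s by rw [map_mul]; rfl,
        inv_mul_cancel, map_one]; rfl] at this
  have hinv' : ρ g₁ s < s → s < ρ g₁⁻¹ s := by
    intro h
    have := (ρ g₁⁻¹).strictMono h
    rwa [show (ρ g₁⁻¹) ((ρ g₁) s) = s by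
      rw [show (ρ g₁⁻¹) ((ρ g₁) s) = ρ (g₁⁻¹ * g₁) s by rw [map_mul]; rfl,
        inv_mul_cancel, map_one]; rfl] at this
  rcases lt_or_gt_of_ne hne with h1 | h1
  · -- ρ g₁ s < s
    rcases le_or_gt (ρ g₂ s) s with h2 | h2
    · have : ρ w₃.prod s < s := by
        apply list_lt ρ s g₁ w₃ _ hm₃ h1
        intro u hu; rcases hw₃ u hu with rfl | rfl
        · exact le_of_lt h1
        · exact h2
      exact absurd hs₃ (ne_of_lt this)
    · have : s < ρ w₄.prod s := by
        apply list_gt ρ s g₁⁻¹ w₄ _ hm₄ (hinv' h1)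
        intro u hu; rcases hw₄ u hu with rfl | rfl
        · exact le_of_lt (hinv' h1)
        · exact le_of_lt h2
      exact absurd hs₄ (ne_of_gt this)
  · -- s < ρ g₁ s
    rcases le_or_gt s (ρ g₂ s) with h2 | h2
    · have : s < ρ w₃.prod s := by
        apply list_gt ρ s g₁ w₃ _ hm₃ h1
        intro u hu; rcases hw₃ u hu with rfl | rfl
        · exact le_of_lt h1
        · exact h2
      exact absurd hs₃ (ne_of_gt this)
    · have : ρ w₄.prod s < s := by
        apply list_lt ρ s g₁⁻¹ w₄ _ hm₄ (hinv s h1)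
        intro u hu; rcases hw₄ u hu with rfl | rfl
        · exact le_of_lt (hinv s h1)
        · exact le_of_lt h2
      exact absurd hs₄ (ne_of_lt this)
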